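/- Weighted matrix-tree theorem: let w : Fin n → Fin n → R be a symmetric function into a commutative ring with w i i = 0, and define the weighted Laplacian L by L i j = -w i j for i ≠ j and L i i = ∑_{j ≠ i} w i j. Then for every i ∈ Fin n, the determinant of the matrix obtained from L by deleting row i and column i equals the sum over all spanning trees T of the complete graph on Fin n of ∏_{{j,k} ∈ edges(T)} w j k. In particular this minor is independent of the choice of i. -/

import Mathlib

namespace WMT
open SimpleGraph Finset Function

variable {n : ℕ}

/-- smaller endpoint -/
def efst (e : Sym2 (Fin n)) : Fin n :=
  Sym2.lift ⟨fun a b => min a b, fun a b => min_comm a b⟩ e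

/-- larger endpoint -/
def esnd (e : Sym2 (Fin n)) : Fin n :=
  Sym2.lift ⟨fun a b => max a b, fun a b => max_comm a b⟩ e

/-- signed incidence -/
def incZ (v : Fin n) (e : Sym2 (Fin n)) : ℤ :=
  if e.IsDiag then 0 else if v = efst e then 1 else if v = esnd e then -1 else 0

lemma incZ_diag {v : Fin n} {e : Sym2 (Fin n)} (h : e.IsDiag) : incZ v e = 0 := by
  simp [incZ, h]

lemma incZ_cases {a b : Fin n} (hab : a ≠ b) :
    (incZ a s(a, b) = 1 ∧ incZ b s(a, b) = -1) ∨
      (incZ a s(a, b) = -1 ∧ incZ b s(a, b) = 1) := by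
  have hd : ¬ (s(a, b) : Sym2 (Fin n)).IsDiag := by simp [Sym2.mk_isDiag_iff, hab]
  rcases lt_or_gt_of_ne hab with h | h
  · left
    constructor <;> simp [incZ, hd, efst, esnd, min_eq_left h.le, max_eq_right h.le, hab, hab.symm,
      h.ne, h.ne']
  · right
    constructor <;> simp [incZ, hd, efst, esnd, min_eq_right h.le, max_eq_left h.le, hab, hab.symm,
      h.ne, h.ne']

lemma incZ_not_mem {v : Fin n} {e : Sym2 (Fin n)} (h : v ∉ e) : incZ v e = 0 := by
  induction e using Sym2.ind with
  | _ a b =>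
    simp only [Sym2.mem_iff, not_or] at h
    by_cases hd : (s(a,b) : Sym2 (Fin n)).IsDiag
    · exact incZ_diag hd
    · have h1 : v ≠ efst s(a,b) := by
        simp only [efst, Sym2.lift_mk]
        rcases min_choice a b with hm | hm <;> rw [hm] <;> tauto
      have h2 : v ≠ esnd s(a,b) := by
        simp only [esnd, Sym2.lift_mk]
        rcases max_choice a b with hm | hm <;> rw [hm] <;> tauto
      simp [incZ, hd, h1, h2]

lemma incZ_mul {a b : Fin n} (hab : a ≠ b) (u : Fin n) :
    incZ a s(a, b) * incZ u s(a, b) =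
      (if u = a then 1 else 0) - (if u = b then 1 else 0) := by
  by_cases hua : u = a
  · subst hua
    rcases incZ_cases hab with ⟨h1, _⟩ | ⟨h1, _⟩ <;> simp [h1, hab]
  · by_cases hub : u = b
    · subst hub
      rcases incZ_cases hab with ⟨h1, h2⟩ | ⟨h1, h2⟩ <;> simp [h1, h2, hua]
    · have : u ∉ (s(a,b) : Sym2 (Fin n)) := by simp [Sym2.mem_iff, hua, hub]
      simp [incZ_not_mem this, hua, hub]

lemma incZ_sq {v : Fin n} {e : Sym2 (Fin n)} (hm : v ∈ e) (hd : ¬ e.IsDiag) :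
    incZ v e * incZ v e = 1 := by
  obtain ⟨b, rfl⟩ := Sym2.mem_iff_exists.mp hm
  have hab : v ≠ b := by simpa [Sym2.mk_isDiag_iff] using hd
  simpa [hab] using incZ_mul hab v

lemma incZ_mul_other {a b : Fin n} (hab : a ≠ b) :
    incZ a s(a, b) * incZ b s(a, b) = -1 := by
  simpa [hab.symm, hab] using incZ_mul hab b

lemma incZ_add {a b : Fin n} (hab : a ≠ b) :
    incZ a s(a, b) + incZ b s(a, b) = 0 := by
  have hb : (s(a,b) : Sym2 (Fin n)) = s(b,a) := Sym2.eq_swap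
  rcases incZ_cases hab with ⟨h1, h2⟩ | ⟨h1, h2⟩ <;> rw [h1, h2] <;> ring

lemma eq_mk_of_mem_mem {a b : Fin n} {e : Sym2 (Fin n)} (ha : a ∈ e) (hb : b ∈ e)
    (hab : a ≠ b) : e = s(a, b) := by
  obtain ⟨c, rfl⟩ := Sym2.mem_iff_exists.mp ha
  rcases Sym2.mem_iff.mp hb with h | h
  · exact absurd h.symm hab
  · rw [h]


/-- telescoping sum along a walk -/
lemma telescope {G : SimpleGraph (Fin n)} {x y : Fin n} (p : G.Walk x y) (u : Fin n) :
    ((p.darts).map (fun d => incZ d.fst d.edge * incZ u d.edge)).sum =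
      (if u = x then 1 else 0) - (if u = y then 1 else 0) := by
  induction p with
  | nil => simp
  | cons h q ih =>
    rename_i a b c
    simp only [Walk.darts_cons, List.map_cons, List.sum_cons, ih]
    have : (SimpleGraph.Dart.mk (a, b) h).edge = s(a, b) := rfl
    rw [this]
    rw [incZ_mul h.ne u]
    ring

variable {G : SimpleGraph (Fin n)} {i : Fin n}

/-- shortest paths exist -/
lemma exists_shortest (h : G.Reachable x y) :
    ∃ p : G.Walk x y, p.IsPath ∧ p.length = G.dist x y := by
  obtain ⟨p, hp⟩ := h.exists_walk_length_eq_dist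
  refine ⟨p.bypass, p.bypass_isPath, le_antisymm ?_ (SimpleGraph.dist_le _)⟩
  exact hp ▸ p.length_bypass_le

/-- in a tree, a neighbour at distance (to `i`) not larger is exactly one closer. -/
lemma closer (ht : G.IsTree) {v x : Fin n} (hadj : G.Adj v x)
    (hd : G.dist x i ≤ G.dist v i) : G.dist x i + 1 = G.dist v i := by
  have hconn := ht.isConnected
  have hle : G.dist v i ≤ G.dist x i + 1 := by
    obtain ⟨p, hp, hlen⟩ := exists_shortest (hconn x i)
    simpa [hlen] using SimpleGraph.dist_le (Walk.cons hadj p)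
  by_contra hne
  have heq : G.dist x i = G.dist v i := le_antisymm hd (by omega)
  obtain ⟨p, hp, hlen⟩ := exists_shortest (hconn x i)
  have hvs : v ∉ p.support := by
    intro hvs
    have h1 : G.dist v i ≤ (p.dropUntil v hvs).length := SimpleGraph.dist_le _
    have h2 : (p.takeUntil v hvs).length + (p.dropUntil v hvs).length = p.length := by
      have h := congrArg Walk.length (p.take_spec hvs)
      rwa [Walk.length_append] at h
    have h3 : (p.takeUntil v hvs).length ≠ 0 := by
      intro h0
      exact hadj.ne' (Walk.eq_of_length_eq_zero h0)
    omega
  have hq : (Walk.cons hadj p).IsPath := hp.cons hvs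
  obtain ⟨r, hr, hrlen⟩ := exists_shortest (hconn v i)
  have := ht.IsAcyclic.path_unique ⟨Walk.cons hadj p, hq⟩ ⟨r, hr⟩
  have hlencons : (Walk.cons hadj p).length = r.length := by
    rw [Subtype.mk.injEq] at this
    rw [this]
  simp only [Walk.length_cons] at hlencons
  omega


/-- in a tree the closer neighbour is unique -/
lemma unique_closer (ht : G.IsTree) {v x y : Fin n} (hx : G.Adj v x) (hy : G.Adj v y)
    (hdx : G.dist x i + 1 = G.dist v i) (hdy : G.dist y i + 1 = G.dist v i) : x = y := by
  have hconn := ht.isConnected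
  have key : ∀ z : Fin n, (hz : G.Adj v z) → G.dist z i + 1 = G.dist v i →
      ∃ (p : G.Walk v i), p.IsPath ∧ p.getVert 1 = z := by
    intro z hz hdz
    obtain ⟨p, hp, hlen⟩ := exists_shortest (hconn z i)
    have hvs : v ∉ p.support := by
      intro hvs
      have h1 : G.dist v i ≤ (p.dropUntil v hvs).length := SimpleGraph.dist_le _
      have h2 : (p.dropUntil v hvs).length ≤ p.length := Walk.length_dropUntil_le p hvs
      omega
    exact ⟨Walk.cons hz p, hp.cons hvs, by simp⟩
  obtain ⟨p, hp, hp1⟩ := key x hx hdx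
  obtain ⟨q, hq, hq1⟩ := key y hy hdy
  have := ht.IsAcyclic.path_unique ⟨p, hp⟩ ⟨q, hq⟩
  rw [Subtype.mk.injEq] at this
  rw [← hp1, ← hq1, this]

/-- every vertex other than the root has a closer neighbour -/
lemma exists_closer (ht : G.IsTree) {v : Fin n} (hv : v ≠ i) :
    ∃ x : Fin n, G.Adj v x ∧ G.dist x i + 1 = G.dist v i := by
  have hconn := ht.isConnected
  have hpos : 0 < G.dist v i := hconn.pos_dist_of_ne hv
  obtain ⟨p, hp, hlen⟩ := exists_shortest (hconn v i)
  cases p with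
  | nil => simp at hlen; omega
  | cons h q =>
    rename_i b
    have hble : G.dist b i ≤ G.dist v i := by
      have : G.dist b i ≤ q.length := SimpleGraph.dist_le q
      simp only [Walk.length_cons] at hlen
      omega
    exact ⟨b, h, closer ht h hble⟩

/-- in a tree, an injective, incident edge-selection must pick the parent edge -/
lemma good_parent (ht : G.IsTree) (f : {j : Fin n // j ≠ i} → Sym2 (Fin n))
    (hinj : Function.Injective f) (hmem : ∀ v, ↑v ∈ f v) (hE : ∀ v, f v ∈ G.edgeSet) :
    ∀ (v : {j : Fin n // j ≠ i}) (x : Fin n), f v = s(↑v, x) →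
      G.dist x i + 1 = G.dist ↑v i := by
  suffices h : ∀ (k : ℕ) (v : {j : Fin n // j ≠ i}) (x : Fin n), n ≤ G.dist ↑v i + k →
      f v = s(↑v, x) → G.dist x i + 1 = G.dist ↑v i by
    intro v x hfv
    exact h n v x (by omega) hfv
  intro k
  induction k with
  | zero =>
    intro v x hk hfv
    exfalso
    obtain ⟨p, hp, hlen⟩ := exists_shortest (ht.isConnected ↑v i)
    have := hp.length_lt
    simp only [Fintype.card_fin] at this
    omega
  | succ k ih =>
    intro v x hk hfv
    have hadj : G.Adj ↑v x := by
      rw [← SimpleGraph.mem_edgeSet, ← hfv]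
      exact hE v
    rcases le_or_gt (G.dist x i) (G.dist ↑v i) with hle | hlt
    · exact closer ht hadj hle
    · exfalso
      have hxv : G.dist ↑v i + 1 = G.dist x i := closer ht hadj.symm (by omega)
      have hxi : x ≠ i := by
        intro hxi
        subst hxi
        rw [SimpleGraph.dist_self] at hxv
        omega
      set x' : {j : Fin n // j ≠ i} := ⟨x, hxi⟩ with hx'
      obtain ⟨y, hy⟩ := Sym2.mem_iff_exists.mp (hmem x')
      have hdy : G.dist y i + 1 = G.dist x i := ih x' y (by simp only [hx']; omega) hy
      have hadjxy : G.Adj x y := by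
        rw [← SimpleGraph.mem_edgeSet, ← hy]
        exact hE x'
      have hyv : y = ↑v := unique_closer ht hadjxy hadj.symm hdy hxv
      have : f x' = f v := by
        rw [hy, hfv, hyv, Sym2.eq_swap]
      have := hinj this
      rw [this] at hx'
      have : x = ↑v := by rw [hx']
      exact hadj.ne' this


/-- integer matrices with a unimodular column dependence have zero determinant -/
lemma det_zero_int {ι : Type*} [Fintype ι] [DecidableEq ι] (M : Matrix ι ι ℤ) (γ : ι → ℤ)
    (v0 : ι) (hγ : γ v0 = 1 ∨ γ v0 = -1) (h : M.mulVec γ = 0) : M.det = 0 := by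
  rw [← Matrix.exists_mulVec_eq_zero_iff]
  refine ⟨γ, ?_, h⟩
  intro h0
  have := congrFun h0 v0
  rcases hγ with h1 | h1 <;> rw [h1] at this <;> simp at this

lemma det_zero_int_row {ι : Type*} [Fintype ι] [DecidableEq ι] (M : Matrix ι ι ℤ) (γ : ι → ℤ)
    (v0 : ι) (hγ : γ v0 = 1 ∨ γ v0 = -1) (h : Matrix.vecMul γ M = 0) : M.det = 0 := by
  rw [← Matrix.det_transpose]
  refine det_zero_int _ γ v0 hγ ?_
  rw [Matrix.mulVec_transpose, h]

section withI
variable {i : Fin n}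

/-- not acyclic implies the reduced incidence determinant vanishes -/
lemma det_zero_of_cycle (r : {j : Fin n // j ≠ i} → Sym2 (Fin n))
    (hinj : Function.Injective r)
    (hcyc : ¬ (SimpleGraph.fromEdgeSet
        (↑(Finset.image r Finset.univ) : Set (Sym2 (Fin n)))).IsAcyclic) :
    (Matrix.of fun u v : {j : Fin n // j ≠ i} => incZ (↑u : Fin n) (r v)).det = 0 := by
  classical
  set G := SimpleGraph.fromEdgeSet (↑(Finset.image r Finset.univ) : Set (Sym2 (Fin n))) with hG
  simp only [SimpleGraph.IsAcyclic] at hcyc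
  push_neg at hcyc
  obtain ⟨a, c, hc⟩ := hcyc
  have hnodupe : c.edges.Nodup := hc.isTrail.edges_nodup
  have hnodupd : c.darts.Nodup := by
    have : c.edges = c.darts.map SimpleGraph.Dart.edge := rfl
    rw [this] at hnodupe
    exact hnodupe.of_map _
  -- each dart's edge is in the image of r
  have hmemim : ∀ d ∈ c.darts, ∃ v, r v = d.edge := by
    intro d hd
    have he : d.edge ∈ c.edges := List.mem_map_of_mem hd
    have := c.edges_subset_edgeSet he
    simp only [hG, SimpleGraph.edgeSet_fromEdgeSet] at this
    obtain ⟨h1, -⟩ := this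
    simpa using h1
  set γ : {j : Fin n // j ≠ i} → ℤ := fun v =>
    ∑ d ∈ c.darts.toFinset, if d.edge = r v then incZ d.fst d.edge else 0 with hγdef
  -- the dependence
  have hdep : (Matrix.of fun u v : {j : Fin n // j ≠ i} => incZ (↑u : Fin n) (r v)).mulVec γ
      = 0 := by
    funext u
    show (∑ v, incZ (↑u : Fin n) (r v) * γ v) = 0
    have step1 : ∀ v : {j : Fin n // j ≠ i}, incZ (↑u : Fin n) (r v) * γ v =
        ∑ d ∈ c.darts.toFinset, if r v = d.edge then
          incZ d.fst d.edge * incZ (↑u : Fin n) d.edge else 0 := by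
      intro v
      rw [hγdef, Finset.mul_sum]
      refine Finset.sum_congr rfl fun d _ => ?_
      by_cases h : d.edge = r v
      · rw [if_pos h, if_pos h.symm, ← h]
        ring
      · rw [if_neg h, if_neg (Ne.symm h), mul_zero]
    rw [Finset.sum_congr rfl fun v _ => step1 v, Finset.sum_comm]
    have step2 : ∀ d ∈ c.darts.toFinset,
        (∑ v : {j : Fin n // j ≠ i}, if r v = d.edge then
          incZ d.fst d.edge * incZ (↑u : Fin n) d.edge else 0) =
        incZ d.fst d.edge * incZ (↑u : Fin n) d.edge := by
      intro d hd
      obtain ⟨vd, hvd⟩ := hmemim d (List.mem_toFinset.mp hd)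
      rw [Finset.sum_eq_single_of_mem vd (Finset.mem_univ _)]
      · rw [if_pos hvd]
      · intro v _ hv
        rw [if_neg]
        intro hrv
        exact hv (hinj (hrv.trans hvd.symm))
    rw [Finset.sum_congr rfl step2]
    have : (∑ d ∈ c.darts.toFinset, incZ d.fst d.edge * incZ (↑u : Fin n) d.edge) =
        ((c.darts).map (fun d => incZ d.fst d.edge * incZ (↑u : Fin n) d.edge)).sum := by
      rw [List.sum_toFinset _ hnodupd]
    rw [this, telescope c (↑u : Fin n)]
    simp
  -- nontriviality
  cases c with
  | nil => exact absurd rfl hc.ne_nil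
  | cons hadj q =>
    rename_i b
    set d0 : G.Dart := SimpleGraph.Dart.mk (a, b) hadj with hd0
    have hd0mem : d0 ∈ (Walk.cons hadj q).darts := by
      rw [Walk.darts_cons]
      exact List.mem_cons_self
    obtain ⟨v0, hv0⟩ := hmemim d0 hd0mem
    refine det_zero_int _ γ v0 ?_ hdep
    have hγv0 : γ v0 = incZ d0.fst d0.edge := by
      simp only [hγdef]
      rw [Finset.sum_eq_single_of_mem d0 (List.mem_toFinset.mpr hd0mem)]
      · rw [if_pos hv0.symm]
      · intro d hd hne
        rw [if_neg]
        intro hrv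
        have hnodupe' : ((Walk.cons hadj q).darts.map SimpleGraph.Dart.edge).Nodup := hnodupe
        exact hne (List.inj_on_of_nodup_map hnodupe' (List.mem_toFinset.mp hd) hd0mem
          (by rw [hrv, hv0]))
    have hfst : d0.fst = a := rfl
    have hedge : d0.edge = s(a, b) := rfl
    rw [hfst, hedge] at hγv0
    rcases incZ_cases hadj.ne with ⟨h1, -⟩ | ⟨h1, -⟩
    · exact Or.inl (hγv0.trans h1)
    · exact Or.inr (hγv0.trans h1)

/-- not connected implies the reduced incidence determinant vanishes -/
lemma det_zero_of_not_connected (r : {j : Fin n // j ≠ i} → Sym2 (Fin n))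
    (hmem : ∀ v, (↑v : Fin n) ∈ r v) (hnd : ∀ v, ¬ (r v).IsDiag)
    (hconn : ¬ (SimpleGraph.fromEdgeSet
        (↑(Finset.image r Finset.univ) : Set (Sym2 (Fin n)))).Connected) :
    (Matrix.of fun u v : {j : Fin n // j ≠ i} => incZ (↑u : Fin n) (r v)).det = 0 := by
  classical
  set G := SimpleGraph.fromEdgeSet (↑(Finset.image r Finset.univ) : Set (Sym2 (Fin n))) with hG
  rw [SimpleGraph.connected_iff] at hconn
  push_neg at hconn
  have hpre : ¬ G.Preconnected := fun hp => @IsEmpty.false _ (hconn hp) i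
  simp only [SimpleGraph.Preconnected] at hpre
  push_neg at hpre
  obtain ⟨a, b, hab⟩ := hpre
  set c0 : Fin n := if G.Reachable i a then b else a with hc0
  have hic0 : ¬ G.Reachable i c0 := by
    rw [hc0]
    split_ifs with h
    · intro hib
      exact hab (h.symm.trans hib)
    · exact h
  have hc0i : c0 ≠ i := fun h => hic0 (h ▸ Reachable.refl _)
  set γ : {j : Fin n // j ≠ i} → ℤ := fun v => if G.Reachable ↑v c0 then 1 else 0 with hγdef
  have hdep : Matrix.vecMul γ (Matrix.of fun u v : {j : Fin n // j ≠ i} =>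
      incZ (↑u : Fin n) (r v)) = 0 := by
    funext v
    show (∑ u : {j : Fin n // j ≠ i}, γ u * incZ (↑u : Fin n) (r v)) = 0
    set F : Fin n → ℤ := fun z => (if G.Reachable z c0 then 1 else 0) * incZ z (r v) with hF
    have h1 : (∑ u : {j : Fin n // j ≠ i}, γ u * incZ (↑u : Fin n) (r v)) = ∑ z, F z := by
      rw [← Finset.sum_subtype (Finset.univ.filter (fun j : Fin n => j ≠ i))
        (by simp) F]
      rw [Finset.sum_filter]
      refine Finset.sum_congr rfl fun z _ => ?_
      by_cases hz : z = i
      · subst hz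
        simp only [hF, if_neg hic0, zero_mul, if_neg (not_not.mpr rfl)]
      · rw [if_pos hz]
    rw [h1]
    obtain ⟨b', hb'⟩ := Sym2.mem_iff_exists.mp (hmem v)
    have hne : (↑v : Fin n) ≠ b' := by
      intro h
      apply hnd v
      rw [hb', ← h]
      simp
    have hadj : G.Adj ↑v b' := by
      rw [hG, SimpleGraph.fromEdgeSet_adj]
      refine ⟨?_, hne⟩
      rw [← hb']
      simpa using Finset.mem_image_of_mem r (Finset.mem_univ v)
    have h2 : (∑ z, F z) = F ↑v + F b' := by
      rw [← Finset.sum_subset (Finset.subset_univ {(↑v : Fin n), b'})]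
      · rw [Finset.sum_insert (by simpa using hne), Finset.sum_singleton]
      · intro z _ hz
        simp only [Finset.mem_insert, Finset.mem_singleton, not_or] at hz
        have : z ∉ r v := by
          rw [hb', Sym2.mem_iff]
          tauto
        simp [hF, incZ_not_mem this]
    rw [h2]
    simp only [hF]
    have hiff : G.Reachable ↑v c0 ↔ G.Reachable b' c0 :=
      ⟨fun h => hadj.symm.reachable.trans h, fun h => hadj.reachable.trans h⟩
    by_cases hre : G.Reachable ↑v c0
    · rw [if_pos hre, if_pos (hiff.mp hre), hb', one_mul, one_mul, incZ_add hne]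
    · rw [if_neg hre, if_neg (fun h => hre (hiff.mpr h)), zero_mul, zero_mul, add_zero]
  refine det_zero_int_row _ γ ⟨c0, hc0i⟩ ?_ hdep
  exact Or.inl (by simp [hγdef, Reachable.refl])

end withI

lemma det_tree (r : {j : Fin n // j ≠ i} → Sym2 (Fin n))
    (hinj : Function.Injective r) (hmem : ∀ v, (↑v : Fin n) ∈ r v)
    (hnd : ∀ v, ¬ (r v).IsDiag)
    (ht : (SimpleGraph.fromEdgeSet
        (↑(Finset.image r Finset.univ) : Set (Sym2 (Fin n)))).IsTree) :
    (Matrix.of fun u v : {j : Fin n // j ≠ i} => incZ (↑u : Fin n) (r v)).det =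
      ∏ v : {j : Fin n // j ≠ i}, incZ (↑v : Fin n) (r v) := by
  classical
  set G := SimpleGraph.fromEdgeSet (↑(Finset.image r Finset.univ) : Set (Sym2 (Fin n))) with hG
  have hE : ∀ v, r v ∈ G.edgeSet := by
    intro v
    rw [hG, SimpleGraph.edgeSet_fromEdgeSet]
    refine ⟨by simpa using Finset.mem_image_of_mem r (Finset.mem_univ v), hnd v⟩
  have hpar := good_parent ht r hinj hmem hE
  have hg : ∀ v, ∃ x, r v = s((↑v : Fin n), x) := fun v => Sym2.mem_iff_exists.mp (hmem v)
  choose g hgs using hg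
  set m := Fintype.card {j : Fin n // j ≠ i} with hm
  set e0 : Fin m ≃ {j : Fin n // j ≠ i} := (Fintype.equivFin _).symm with he0
  set dd' : Fin m → ℕ := fun a => G.dist ↑(e0 a) i with hdd'
  set e : Fin m ≃ {j : Fin n // j ≠ i} := (Tuple.sort dd').trans e0 with he
  have hmono : Monotone (dd' ∘ Tuple.sort dd') := Tuple.monotone_sort dd'
  have hkey : ∀ a b : Fin m, b < a → incZ (↑(e a) : Fin n) (r (e b)) = 0 := by
    intro a b hba
    by_contra h0
    have hmem' : (↑(e a) : Fin n) ∈ r (e b) := by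
      by_contra hmm
      exact h0 (incZ_not_mem hmm)
    rw [hgs (e b)] at hmem'
    rcases Sym2.mem_iff.mp hmem' with h | h
    · have : e a = e b := Subtype.coe_injective h
      exact absurd (e.injective this) hba.ne'
    · have hlt : G.dist (g (e b)) i + 1 = G.dist ↑(e b) i := hpar (e b) _ (hgs (e b))
      have h1 : G.dist ↑(e a) i = G.dist (g (e b)) i := by rw [h]
      have h2 : dd' (Tuple.sort dd' b) ≤ dd' (Tuple.sort dd' a) := hmono hba.le
      have h3 : dd' (Tuple.sort dd' b) = G.dist ↑(e b) i := by rw [he]; rfl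
      have h4 : dd' (Tuple.sort dd' a) = G.dist ↑(e a) i := by rw [he]; rfl
      omega
  rw [← Matrix.det_submatrix_equiv_self e]
  rw [Matrix.det_of_upperTriangular]
  · exact Equiv.prod_comp e (fun v => incZ (↑v : Fin n) (r v))
  · intro a b hab
    exact hkey a b hab

lemma pm_props {i : Fin n} {T : Finset (Sym2 (Fin n))}
    (ht : (SimpleGraph.fromEdgeSet (↑T : Set (Sym2 (Fin n)))).IsTree)
    (hcardT : T.card = n - 1)
    (hcardV : Fintype.card {j : Fin n // j ≠ i} = n - 1) :
    Function.Injective (fun v : {j : Fin n // j ≠ i} =>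
        s((↑v : Fin n), Classical.choose (exists_closer ht v.2))) ∧
    Finset.image (fun v : {j : Fin n // j ≠ i} =>
        s((↑v : Fin n), Classical.choose (exists_closer ht v.2))) Finset.univ = T ∧
    ∀ v : {j : Fin n // j ≠ i},
      (↑v : Fin n) ∈ s((↑v : Fin n), Classical.choose (exists_closer ht v.2)) ∧
      ¬ (s((↑v : Fin n), Classical.choose (exists_closer ht v.2))).IsDiag := by
  classical
  set G := SimpleGraph.fromEdgeSet (↑T : Set (Sym2 (Fin n))) with hG
  have hsp : ∀ v : {j : Fin n // j ≠ i},
      G.Adj ↑v (Classical.choose (exists_closer ht v.2)) ∧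
      G.dist (Classical.choose (exists_closer ht v.2)) i + 1 = G.dist ↑v i :=
    fun v => Classical.choose_spec (exists_closer ht v.2)
  have hinj : Function.Injective (fun v : {j : Fin n // j ≠ i} =>
      s((↑v : Fin n), Classical.choose (exists_closer ht v.2))) := by
    intro v1 v2 h
    simp only at h
    rcases Sym2.eq_iff.mp h with ⟨h1, h2⟩ | ⟨h1, h2⟩
    · exact Subtype.ext h1
    · exfalso
      have d1 := (hsp v1).2
      have d2 := (hsp v2).2
      have e1 := congrArg (fun z => G.dist z i) h2
      have e2 := congrArg (fun z => G.dist z i) h1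
      omega
  refine ⟨hinj, ?_, fun v => ⟨Sym2.mem_mk_left _ _, by
    simp only [Sym2.mk_isDiag_iff]
    exact (hsp v).1.ne⟩⟩
  have hsub : Finset.image (fun v : {j : Fin n // j ≠ i} =>
      s((↑v : Fin n), Classical.choose (exists_closer ht v.2))) Finset.univ ⊆ T := by
    intro e he
    obtain ⟨v, -, rfl⟩ := Finset.mem_image.mp he
    have h3 : s((↑v : Fin n), Classical.choose (exists_closer ht v.2)) ∈
        (↑T : Set (Sym2 (Fin n))) \ Sym2.diagSet := by
      rw [← SimpleGraph.edgeSet_fromEdgeSet (↑T : Set (Sym2 (Fin n)))]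
      exact G.mem_edgeSet.mpr (hsp v).1
    exact h3.1
  refine Finset.eq_of_subset_of_card_le hsub ?_
  rw [Finset.card_image_of_injective _ hinj, Finset.card_univ, hcardV, hcardT]

end WMT

/-- A spanning tree of the complete graph on `Fin n`: a set of `n - 1` unordered
pairs of distinct vertices whose associated graph is connected and acyclic. -/
def IsSpanningTree (n : ℕ) (T : Finset (Sym2 (Fin n))) : Prop :=
  (∀ e ∈ T, ¬ e.IsDiag) ∧ T.card = n - 1 ∧
    (SimpleGraph.fromEdgeSet (↑T : Set (Sym2 (Fin n)))).IsTree

/-- Delete row `i` and column `i` from a square matrix. -/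
def deleteRowCol {n : ℕ} {R : Type*} (L : Matrix (Fin n) (Fin n) R) (i : Fin n) :
    Matrix {j : Fin n // j ≠ i} {j : Fin n // j ≠ i} R :=
  L.submatrix Subtype.val Subtype.val

open Classical in
/-- Weighted matrix-tree theorem: for a symmetric weight `w` with vanishing
diagonal, any principal `(i,i)`-minor of the weighted Laplacian equals the sum
over spanning trees of the complete graph of the products of edge weights. -/
theorem weighted_matrix_tree (n : ℕ) (R : Type*) [CommRing R]
    (w : Fin n → Fin n → R) (hsym : ∀ i j, w i j = w j i) (hdiag : ∀ i, w i i = 0)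
    (L : Matrix (Fin n) (Fin n) R)
    (hL : ∀ i j, i ≠ j → L i j = - w i j)
    (hLd : ∀ i, L i i = ∑ j ∈ Finset.univ.filter (fun j => j ≠ i), w i j)
    (i : Fin n) :
    (deleteRowCol L i).det =
      ∑ T ∈ Finset.univ.filter (fun T : Finset (Sym2 (Fin n)) => IsSpanningTree n T),
        ∏ e ∈ T, Sym2.lift ⟨w, fun a b => hsym a b⟩ e := by
  classical
  set W : Sym2 (Fin n) → R := Sym2.lift ⟨w, fun a b => hsym a b⟩ with hW
  have cast_rearr : ∀ (a b : ℤ) (c : R), (a : R) * (c * (b : R)) = ((a * b : ℤ) : R) * c := by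
    intro a b c; push_cast; ring
  -- Step A : entries of the reduced Laplacian as sums over all edges
  have hsum : ∀ u v : {j : Fin n // j ≠ i}, L ↑u ↑v =
      ∑ e : Sym2 (Fin n), (WMT.incZ ↑u e : R) * (W e * (WMT.incZ ↑v e : R)) := by
    intro u v
    by_cases huv : (↑u : Fin n) = ↑v
    · rw [← huv, hLd ↑u]
      have h1 : ∀ e : Sym2 (Fin n), (WMT.incZ ↑u e : R) * (W e * (WMT.incZ ↑u e : R)) =
          if (↑u : Fin n) ∈ e ∧ ¬ e.IsDiag then W e else 0 := by
        intro e
        rw [cast_rearr]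
        by_cases hd : e.IsDiag
        · simp [WMT.incZ_diag hd, hd]
        · by_cases hm : (↑u : Fin n) ∈ e
          · rw [WMT.incZ_sq hm hd, if_pos ⟨hm, hd⟩]
            simp
          · simp [WMT.incZ_not_mem hm, hm]
      rw [Finset.sum_congr rfl fun e _ => h1 e, ← Finset.sum_filter]
      have h2 : Finset.univ.filter (fun e : Sym2 (Fin n) => (↑u : Fin n) ∈ e ∧ ¬ e.IsDiag) =
          Finset.image (fun k => s((↑u : Fin n), k))
            (Finset.univ.filter (fun k => k ≠ (↑u : Fin n))) := by
        ext e
        simp only [Finset.mem_filter, Finset.mem_univ, true_and, Finset.mem_image]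
        constructor
        · rintro ⟨hm, hd⟩
          obtain ⟨k, rfl⟩ := Sym2.mem_iff_exists.mp hm
          refine ⟨k, fun hk => hd ?_, rfl⟩
          rw [hk]; simp
        · rintro ⟨k, hk, rfl⟩
          exact ⟨Sym2.mem_mk_left _ _, by simp [Sym2.mk_isDiag_iff, Ne.symm hk]⟩
      rw [h2, Finset.sum_image (fun k₁ h₁ k₂ h₂ h => Sym2.congr_right.mp h)]
      refine Finset.sum_congr ?_ fun k hk => ?_
      · ext k; simp [ne_comm]
      · rw [hW]; simp
    · rw [hL ↑u ↑v huv, Finset.sum_eq_single s((↑u : Fin n), (↑v : Fin n))]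
      · rw [cast_rearr, WMT.incZ_mul_other huv]
        rw [hW]
        simp only [Sym2.lift_mk]
        push_cast
        ring
      · intro e _ hne
        rw [cast_rearr]
        convert zero_mul (W e)
        by_cases hd : e.IsDiag
        · rw [WMT.incZ_diag hd]; simp
        · by_cases hm1 : (↑u : Fin n) ∈ e
          · by_cases hm2 : (↑v : Fin n) ∈ e
            · exact absurd (WMT.eq_mk_of_mem_mem hm1 hm2 huv) hne
            · rw [WMT.incZ_not_mem hm2]; simp
          · rw [WMT.incZ_not_mem hm1]; simp
      · intro h
        exact absurd (Finset.mem_univ _) h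
  -- Step B : expansion of the determinant over edge choices
  set V' := {j : Fin n // j ≠ i} with hV'
  have hM : deleteRowCol L i = Matrix.of (fun u : V' =>
      ∑ e : Sym2 (Fin n), (WMT.incZ ↑u e : R) • fun v : V' => W e * (WMT.incZ ↑v e : R)) := by
    ext u v
    show L ↑u ↑v = (∑ e : Sym2 (Fin n),
      (WMT.incZ ↑u e : R) • fun v : V' => W e * (WMT.incZ ↑v e : R)) v
    rw [hsum u v, Finset.sum_apply]
    rfl
  have hB : (deleteRowCol L i).det =
      ∑ r : V' → Sym2 (Fin n),
        (((∏ v : V', WMT.incZ ↑v (r v)) *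
          (Matrix.of fun u v : V' => WMT.incZ (↑u : Fin n) (r v)).det : ℤ) : R) *
          ∏ v : V', W (r v) := by
    rw [hM]
    have e1 : (Matrix.of (fun u : V' =>
        ∑ e : Sym2 (Fin n), (WMT.incZ ↑u e : R) • fun v : V' => W e * (WMT.incZ ↑v e : R))).det
        = (Matrix.detRowAlternating (R := R) (n := V')).toMultilinearMap
          (fun u : V' => ∑ e : Sym2 (Fin n),
            (WMT.incZ ↑u e : R) • fun v : V' => W e * (WMT.incZ ↑v e : R)) := rfl
    rw [e1, MultilinearMap.map_sum]
    refine Finset.sum_congr rfl fun r _ => ?_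
    rw [MultilinearMap.map_smul_univ]
    have e5 : (Matrix.of fun u v : V' => W (r u) * (WMT.incZ ↑v (r u) : R)).det
        = (∏ u : V', W (r u)) *
          (((Matrix.of fun u v : V' => WMT.incZ (↑u : Fin n) (r v)).det : ℤ) : R) := by
      have h1 : (Matrix.of fun u v : V' => W (r u) * (WMT.incZ ↑v (r u) : R))
          = Matrix.of (fun u v : V' => W (r u) *
              (Matrix.of fun a b : V' => (WMT.incZ ↑b (r a) : R)) u v) := rfl
      rw [h1, Matrix.det_mul_column]
      congr 1
      have t1 : (Matrix.of fun a b : V' => (WMT.incZ ↑b (r a) : R)).det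
          = (Matrix.of fun a b : V' => (WMT.incZ ↑a (r b) : R)).transpose.det := rfl
      have t2 : (Matrix.of fun a b : V' => (WMT.incZ ↑a (r b) : R)).transpose.det
          = (Matrix.of fun a b : V' => (WMT.incZ ↑a (r b) : R)).det := Matrix.det_transpose _
      have t3 : (Matrix.of fun a b : V' => (WMT.incZ ↑a (r b) : R)).det
          = (((Matrix.of fun u v : V' => WMT.incZ (↑u : Fin n) (r v)).det : ℤ) : R) :=
        (RingHom.map_det (Int.castRingHom R) _).symm
      exact t1.trans (t2.trans t3)
    show (∏ v : V', (WMT.incZ (↑v : Fin n) (r v) : R)) •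
        (Matrix.of fun u v : V' => W (r u) * (WMT.incZ ↑v (r u) : R)).det =
      (((∏ v : V', WMT.incZ (↑v : Fin n) (r v)) *
        (Matrix.of fun u v : V' => WMT.incZ (↑u : Fin n) (r v)).det : ℤ) : R) *
        ∏ v : V', W (r v)
    rw [e5, smul_eq_mul]
    push_cast
    ring
  -- Step C : characterisation of the integer coefficient
  have hcard : Fintype.card V' = n - 1 := by
    have h1 : Fintype.card {j : Fin n // j = i} = 1 := Fintype.card_subtype_eq i
    have h2 := Fintype.card_subtype_compl (fun j : Fin n => j = i)
    rw [h1, Fintype.card_fin] at h2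
    exact h2
  set Good : (V' → Sym2 (Fin n)) → Prop := fun r =>
    (∀ v : V', (↑v : Fin n) ∈ r v ∧ ¬ (r v).IsDiag) ∧ Function.Injective r ∧
      (SimpleGraph.fromEdgeSet
        (↑(Finset.image r Finset.univ) : Set (Sym2 (Fin n)))).IsTree with hGood
  have hchar : ∀ r : V' → Sym2 (Fin n),
      ((∏ v : V', WMT.incZ ↑v (r v)) *
        (Matrix.of fun u v : V' => WMT.incZ (↑u : Fin n) (r v)).det : ℤ)
      = if Good r then 1 else 0 := by
    intro r
    by_cases hg : Good r
    · rw [if_pos hg]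
      obtain ⟨hmm, hinj, ht⟩ := hg
      rw [WMT.det_tree r hinj (fun v => (hmm v).1) (fun v => (hmm v).2) ht]
      rw [← Finset.prod_mul_distrib]
      rw [Finset.prod_congr rfl (fun v _ => WMT.incZ_sq (hmm v).1 (hmm v).2)]
      exact Finset.prod_const_one
    · rw [if_neg hg]
      by_cases hmm : ∀ v : V', (↑v : Fin n) ∈ r v ∧ ¬ (r v).IsDiag
      · by_cases hinj : Function.Injective r
        · have hnt : ¬ (SimpleGraph.fromEdgeSet
              (↑(Finset.image r Finset.univ) : Set (Sym2 (Fin n)))).IsTree :=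
            fun h => hg ⟨hmm, hinj, h⟩
          rw [SimpleGraph.isTree_iff] at hnt
          rw [not_and_or] at hnt
          rcases hnt with hnc | hna
          · rw [WMT.det_zero_of_not_connected r (fun v => (hmm v).1) (fun v => (hmm v).2) hnc,
              mul_zero]
          · rw [WMT.det_zero_of_cycle r hinj hna, mul_zero]
        · rw [Function.not_injective_iff] at hinj
          obtain ⟨a, b, hab, hne⟩ := hinj
          rw [Matrix.det_zero_of_column_eq hne (fun k => by simp [hab]), mul_zero]
      · push_neg at hmm
        obtain ⟨v, hv⟩ := hmm
        have hz : WMT.incZ (↑v : Fin n) (r v) = 0 := by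
          by_cases hm : (↑v : Fin n) ∈ r v
          · exact WMT.incZ_diag (hv hm)
          · exact WMT.incZ_not_mem hm
        rw [Finset.prod_eq_zero (Finset.mem_univ v) hz, zero_mul]
  -- Step D : summation over trees
  rw [hB]
  have hstep : ∀ r : V' → Sym2 (Fin n),
      (((∏ v : V', WMT.incZ ↑v (r v)) *
          (Matrix.of fun u v : V' => WMT.incZ (↑u : Fin n) (r v)).det : ℤ) : R) *
          ∏ v : V', W (r v)
      = if Good r then ∏ v : V', W (r v) else 0 := by
    intro r
    rw [hchar r]
    split_ifs <;> simp
  rw [Finset.sum_congr rfl fun r _ => hstep r, ← Finset.sum_filter]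
  refine Finset.sum_bij' (i := fun r _ => Finset.image r Finset.univ)
    (j := fun T hT v => s((↑v : Fin n), Classical.choose (WMT.exists_closer
      ((Finset.mem_filter.mp hT).2.2.2) v.2))) ?_ ?_ ?_ ?_ ?_
  · intro r hr
    simp only [Finset.mem_filter, Finset.mem_univ, true_and]
    obtain ⟨hmm, hinj, ht⟩ := (Finset.mem_filter.mp hr).2
    refine ⟨?_, ?_, ht⟩
    · intro e he
      obtain ⟨v, -, rfl⟩ := Finset.mem_image.mp he
      exact (hmm v).2
    · rw [Finset.card_image_of_injective _ hinj, Finset.card_univ, hcard]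
  · intro T hT
    simp only [Finset.mem_filter, Finset.mem_univ, true_and]
    obtain ⟨hnd, hcardT, ht⟩ := (Finset.mem_filter.mp hT).2
    obtain ⟨hinj, himg, hmm⟩ := WMT.pm_props ht hcardT hcard
    refine ⟨hmm, hinj, ?_⟩
    have h2 := himg
    rw [show Finset.image (fun v : V' =>
        s((↑v : Fin n), Classical.choose (WMT.exists_closer ht v.2))) Finset.univ
      = Finset.image (fun v : V' => s((↑v : Fin n), Classical.choose (WMT.exists_closer
        ((Finset.mem_filter.mp hT).2.2.2) v.2))) Finset.univ from rfl] at h2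
    rw [h2]
    exact ht
  · intro r hr
    obtain ⟨hmm, hinj, ht⟩ := (Finset.mem_filter.mp hr).2
    funext v
    show s((↑v : Fin n), Classical.choose (WMT.exists_closer ht v.2)) = r v
    obtain ⟨hadj, hdist⟩ := Classical.choose_spec (WMT.exists_closer ht v.2)
    obtain ⟨g, hg⟩ := Sym2.mem_iff_exists.mp (hmm v).1
    have hE : ∀ u : V', r u ∈ (SimpleGraph.fromEdgeSet
        (↑(Finset.image r Finset.univ) : Set (Sym2 (Fin n)))).edgeSet := by
      intro u
      rw [SimpleGraph.edgeSet_fromEdgeSet]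
      exact ⟨by simpa using Finset.mem_image_of_mem r (Finset.mem_univ u), (hmm u).2⟩
    have hgdist := WMT.good_parent ht r hinj (fun u => (hmm u).1) hE v g hg
    have hgadj : (SimpleGraph.fromEdgeSet
        (↑(Finset.image r Finset.univ) : Set (Sym2 (Fin n)))).Adj ↑v g := by
      rw [← SimpleGraph.mem_edgeSet, ← hg]
      exact hE v
    have : Classical.choose (WMT.exists_closer ht v.2) = g :=
      WMT.unique_closer ht hadj hgadj hdist hgdist
    rw [this, hg]
  · intro T hT
    obtain ⟨hnd, hcardT, ht⟩ := (Finset.mem_filter.mp hT).2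
    obtain ⟨hinj, himg, hmm⟩ := WMT.pm_props ht hcardT hcard
    exact himg
  · intro r hr
    obtain ⟨hmm, hinj, ht⟩ := (Finset.mem_filter.mp hr).2
    exact (Finset.prod_image fun x _ y _ h => hinj h).symm
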